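/- arXiv:1408.1687 — 5 statements merged into one kernel-verified Lean document; each statement's English description precedes it below -/
import Mathlib

section
/- Let R be a ring with identity in which 2 is invertible, and let a ∈ R be such that a - a³ is regular (i.e., a - a³ = (a-a³)s(a-a³) for some s ∈ R). Then a itself is regular; explicitly, a = axa where x = a + (1-a²)s(1-a²). -/
noncomputable section

namespace SepExchange

variable (R : Type) [Ring R]

/-- The right annihilator `r(a)` as a right `R`-submodule of `R`. -/
def rAnn (a : R) : Submodule Rᵐᵒᵖ R where
  carrier := {x | a * x = 0}
  add_mem' := by intro x y hx hy; simp_all [Set.mem_setOf_eq, mul_add]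
  zero_mem' := by simp
  smul_mem' := by
    intro c x hx
    simp only [Set.mem_setOf_eq, MulOpposite.smul_eq_mul_unop] at *
    rw [← mul_assoc, hx, zero_mul]

/-- The principal right ideal `aR` as a right `R`-submodule of `R`. -/
def rIdeal (a : R) : Submodule Rᵐᵒᵖ R := Submodule.span Rᵐᵒᵖ {a}

/-- The right `R`-module `a·r(a²) = {a*t : a²*t = 0}`. -/
def arAnn2 (a : R) : Submodule Rᵐᵒᵖ R where
  carrier := {x | ∃ t, x = a * t ∧ a ^ 2 * t = 0}
  add_mem' := by
    rintro x y ⟨t1, rfl, h1⟩ ⟨t2, rfl, h2⟩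
    exact ⟨t1 + t2, by rw [mul_add], by rw [mul_add, h1, h2, add_zero]⟩
  zero_mem' := ⟨0, by simp, by simp⟩
  smul_mem' := by
    rintro c x ⟨t, rfl, ht⟩
    refine ⟨t * c.unop, ?_, ?_⟩
    · simp only [MulOpposite.smul_eq_mul_unop, mul_assoc]
    · rw [← mul_assoc, ht, zero_mul]

/-- `R` is an exchange ring: for each `a` there is an idempotent `e ∈ aR`
with `1 - e ∈ (1-a)R`. -/
def ExchangeRing : Prop :=
  ∀ a : R, ∃ e : R, IsIdempotentElem e ∧ (∃ r, e = a * r) ∧ (∃ s, (1 : R) - e = (1 - a) * s)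

/-- `R` is separative: `A⊕A ≅ A⊕B ≅ B⊕B ⟹ A ≅ B` for finitely generated
projective right `R`-modules. -/
def Separative : Prop :=
  ∀ (A B : Type) [AddCommGroup A] [Module Rᵐᵒᵖ A] [AddCommGroup B] [Module Rᵐᵒᵖ B],
    Module.Finite Rᵐᵒᵖ A → Module.Projective Rᵐᵒᵖ A →
    Module.Finite Rᵐᵒᵖ B → Module.Projective Rᵐᵒᵖ B →
    Nonempty ((A × A) ≃ₗ[Rᵐᵒᵖ] (A × B)) → Nonempty ((A × B) ≃ₗ[Rᵐᵒᵖ] (B × B)) →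
    Nonempty (A ≃ₗ[Rᵐᵒᵖ] B)

/-- `a` is unit-regular. -/
def IsUnitRegular (a : R) : Prop := ∃ u : Rˣ, a = a * (u : R) * a

/-- `a` is special clean: there is an idempotent `e` with `a - e` a unit and
`aR ∩ eR = 0`. -/
def IsSpecialClean (a : R) : Prop :=
  ∃ e : R, IsIdempotentElem e ∧ IsUnit (a - e) ∧ rIdeal R a ⊓ rIdeal R e = ⊥

/-- `A ≲⊕ B`: `A` is isomorphic to a direct summand of `B` (right `R`-modules). -/
def SummandOf (A B : Type) [AddCommGroup A] [Module Rᵐᵒᵖ A]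
    [AddCommGroup B] [Module Rᵐᵒᵖ B] : Prop :=
  ∃ N N' : Submodule Rᵐᵒᵖ B, IsCompl N N' ∧ Nonempty (A ≃ₗ[Rᵐᵒᵖ] ↥N)

/-- `A ∝ B`: `A` is isomorphic to a direct summand of a finite direct sum of
copies of `B`. -/
def Propto (A B : Type) [AddCommGroup A] [Module Rᵐᵒᵖ A]
    [AddCommGroup B] [Module Rᵐᵒᵖ B] : Prop :=
  ∃ m : ℕ, 0 < m ∧ SummandOf R A (Fin m → B)

end SepExchange

open SepExchange in
/-- If `2` is invertible and `a - a³` is regular with inner inverse `s`, then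
`a` is regular with inner inverse `a + (1-a²)s(1-a²)`. -/
theorem stmt0 (R : Type) [Ring R] [Invertible (2 : R)] (a s : R)
    (h : a - a ^ 3 = (a - a ^ 3) * s * (a - a ^ 3)) :
    a = a * (a + (1 - a ^ 2) * s * (1 - a ^ 2)) * a := by
  conv_lhs => rw [show a = a ^ 3 + (a - a ^ 3) from by noncomm_ring, h]
  noncomm_ring
end
end

section
/- Let R be a ring and a ∈ R with a - a³ = (a-a³)s(a-a³) for some s ∈ R. Then 1 - a² is regular; explicitly, 1 - a² = (1-a²)(1 + a²sa)(1-a²). -/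
noncomputable section

open SepExchange in
/-- If `a - a³` is regular with inner inverse `s`, then `1 - a²` is regular;
explicitly `1 - a² = (1-a²)(1 + a²sa)(1-a²)`. -/
theorem stmt7 (R : Type) [Ring R] (a s : R)
    (h : a - a ^ 3 = (a - a ^ 3) * s * (a - a ^ 3)) :
    1 - a ^ 2 = (1 - a ^ 2) * (1 + a ^ 2 * s * a) * (1 - a ^ 2) := by
  have key : (1 - a ^ 2) * (1 + a ^ 2 * s * a) * (1 - a ^ 2)
      = (1 - a ^ 2) * (1 - a ^ 2) + a * ((a - a ^ 3) * s * (a - a ^ 3)) := by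
    noncomm_ring
  rw [key, ← h]
  noncomm_ring
end
end

section
/- Let R be a separative exchange ring in which 2 is invertible, and let a ∈ R with a - a³ regular. If (a-a³)R ∝ r(a) and (a-a³)R ∝ R/aR, then a is unit-regular. -/
noncomputable section

namespace SepAux

open SepExchange MulOpposite

variable {R : Type} [Ring R]

/-- Left multiplication as an `Rᵐᵒᵖ`-linear endomorphism of `R`. -/
def lmul (r : R) : R →ₗ[Rᵐᵒᵖ] R where
  toFun t := r * t
  map_add' x y := mul_add r x y
  map_smul' c x := by
    simp only [MulOpposite.smul_eq_mul_unop, RingHom.id_apply, mul_assoc]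

@[simp] lemma lmul_apply (r t : R) : lmul r t = r * t := rfl

lemma mem_rIdeal_iff {g v : R} : v ∈ rIdeal R g ↔ ∃ u : R, v = g * u := by
  rw [rIdeal, Submodule.mem_span_singleton]
  constructor
  · rintro ⟨r, rfl⟩
    exact ⟨unop r, by simp [MulOpposite.smul_eq_mul_unop]⟩
  · rintro ⟨u, rfl⟩
    exact ⟨op u, by simp [MulOpposite.smul_eq_mul_unop]⟩

lemma rIdeal_le {g : R} {P : Submodule Rᵐᵒᵖ R} (h : g ∈ P) : rIdeal R g ≤ P := by
  rw [rIdeal, Submodule.span_le, Set.singleton_subset_iff]; exact h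

lemma mem_rAnn_iff {a v : R} : v ∈ rAnn R a ↔ a * v = 0 := Iff.rfl

/-- restriction of left multiplication between right ideals -/
def mapIdeal (r : R) (P Q : Submodule Rᵐᵒᵖ R) (h : ∀ v ∈ P, r * v ∈ Q) :
    ↥P →ₗ[Rᵐᵒᵖ] ↥Q :=
  LinearMap.codRestrict Q ((lmul r).comp P.subtype) (fun v => h v.1 v.2)

@[simp] lemma mapIdeal_apply (r : R) (P Q : Submodule Rᵐᵒᵖ R) (h) (v : ↥P) :
    (mapIdeal r P Q h v : R) = r * v.1 := rfl

end SepAux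

namespace SepAux

open SepExchange MulOpposite

variable {R : Type} [Ring R]

theorem key_iso (a s : R) (h1 : (a - a^3) * s * (a - a^3) = a - a^3)
    (h2 : s * (a - a^3) * s = s) :
    Nonempty ((↥(rAnn R a) × ↥(rIdeal R (a - a^3))) ≃ₗ[Rᵐᵒᵖ]
      ((R ⧸ rIdeal R a) × ↥(rIdeal R (a - a^3)))) := by
  set b : R := a - a^3 with hb
  set c : R := 1 - a^2 with hc
  -- basic killing lemma
  have hkill : ∀ z : R, (1 - b*s) * (b*z) = 0 := by
    intro z
    rw [sub_mul, one_mul, ← mul_assoc, h1, sub_self]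
  have hcAnn : ∀ t : R, a * t = 0 → c * t = t := by
    intro t ht
    rw [hc, sub_mul, one_mul, pow_two, mul_assoc, ht, mul_zero, sub_zero]
  -- the equivalence  kR ≃ bR
  have memKB : ∀ v : R, v ∈ rIdeal R (s*b) → b * v ∈ rIdeal R b :=
    fun v _ => mem_rIdeal_iff.mpr ⟨v, rfl⟩
  have memBK : ∀ v : R, v ∈ rIdeal R b → s * v ∈ rIdeal R (s*b) := by
    rintro v hv
    obtain ⟨u, rfl⟩ := mem_rIdeal_iff.mp hv
    exact mem_rIdeal_iff.mpr ⟨u, by rw [mul_assoc]⟩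
  have eKB : (↥(rIdeal R (s*b))) ≃ₗ[Rᵐᵒᵖ] ↥(rIdeal R b) := by
    refine LinearEquiv.ofLinear (mapIdeal b _ _ memKB) (mapIdeal s _ _ memBK) ?_ ?_
    · apply LinearMap.ext; rintro ⟨v, hv⟩
      apply Subtype.ext
      obtain ⟨u, rfl⟩ := mem_rIdeal_iff.mp hv
      show b * (s * (b * u)) = b * u
      rw [← mul_assoc, ← mul_assoc, h1]
    · apply LinearMap.ext; rintro ⟨v, hv⟩
      apply Subtype.ext
      obtain ⟨u, rfl⟩ := mem_rIdeal_iff.mp hv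
      show s * (b * (s * b * u)) = s * b * u
      simp only [← mul_assoc]
      rw [h2]
  -- the equivalence  Ann × kR ≃ cR
  have hAC : rAnn R a ≤ rIdeal R c := by
    intro t ht
    exact mem_rIdeal_iff.mpr ⟨t, (hcAnn t ht).symm⟩
  have memKC : ∀ v : R, v ∈ rIdeal R (s*b) → c * v ∈ rIdeal R c :=
    fun v _ => mem_rIdeal_iff.mpr ⟨v, rfl⟩
  have memInv1 : ∀ v : R, v ∈ rIdeal R c → (1 - c*(s*a)) * v ∈ rAnn R a := by
    rintro v hv
    obtain ⟨u, rfl⟩ := mem_rIdeal_iff.mp hv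
    have e1 : a * ((1 - c*(s*a)) * (c*u)) = b*u - b*s*(b*u) := by
      rw [hb, hc]; noncomm_ring
    show a * ((1 - c*(s*a)) * (c*u)) = 0
    rw [e1, ← mul_assoc, h1, sub_self]
  have memInv2 : ∀ v : R, v ∈ rIdeal R c → (s*a) * v ∈ rIdeal R (s*b) := by
    rintro v hv
    obtain ⟨u, rfl⟩ := mem_rIdeal_iff.mp hv
    have e2 : (s*a) * (c*u) = (s*b)*u := by rw [hb, hc]; noncomm_ring
    exact mem_rIdeal_iff.mpr ⟨u, e2⟩
  have eD : ((↥(rAnn R a)) × ↥(rIdeal R (s*b))) ≃ₗ[Rᵐᵒᵖ] ↥(rIdeal R c) := by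
    refine LinearEquiv.ofLinear
      (LinearMap.coprod (Submodule.inclusion hAC) (mapIdeal c _ _ memKC))
      (LinearMap.prod (mapIdeal (1 - c*(s*a)) _ _ memInv1) (mapIdeal (s*a) _ _ memInv2))
      ?_ ?_
    · apply LinearMap.ext; rintro ⟨v, hv⟩
      apply Subtype.ext
      show (1 - c*(s*a)) * v + c * ((s*a) * v) = v
      noncomm_ring
    · apply LinearMap.ext; rintro ⟨⟨t, ht⟩, ⟨κ, hκ⟩⟩
      have ht' : a * t = 0 := ht
      obtain ⟨u, rfl⟩ := mem_rIdeal_iff.mp hκ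
      have hsum : t + c * (s*b*u) = (t + c * (s*b*u)) := rfl
      apply Prod.ext
      · apply Subtype.ext
        show (1 - c*(s*a)) * (t + c * (s*b*u)) = t
        have e : (1 - c*(s*a)) * (t + c * (s*b*u))
            = t + c * (s*b*u) - c*(s*(a*t)) - c*((s*b*s*b)*u) := by
          rw [hb, hc]; noncomm_ring
        rw [e, ht', mul_zero, mul_zero, sub_zero, h2, add_sub_cancel_right]
      · apply Subtype.ext
        show (s*a) * (t + c * (s*b*u)) = s*b*u
        have e : (s*a) * (t + c * (s*b*u)) = s*(a*t) + s*b*s*b*u := by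
          rw [hb, hc]; noncomm_ring
        rw [e, ht', mul_zero, zero_add, h2]
  -- the equivalence  cR ≃ bR × R/aR
  have memG1 : ∀ v : R, v ∈ rIdeal R c → (1 - (1 - b*s)*c) * v ∈ rIdeal R b := by
    rintro v hv
    obtain ⟨u, rfl⟩ := mem_rIdeal_iff.mp hv
    have e : (1 - (1 - b*s)*c) * (c*u) = b*(a*u + s*(c*(c*u))) := by
      rw [hb, hc]; noncomm_ring
    exact mem_rIdeal_iff.mpr ⟨_, e⟩
  have hBC : rIdeal R b ≤ rIdeal R c := by
    refine rIdeal_le (mem_rIdeal_iff.mpr ⟨a, ?_⟩)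
    rw [hb, hc]; noncomm_ring
  have memψ : ∀ t : R, ((1 - b*s)*c) * t ∈ rIdeal R c := by
    intro t
    have e : ((1 - b*s)*c) * t = c*(t - a*(s*(c*t))) := by rw [hb, hc]; noncomm_ring
    exact mem_rIdeal_iff.mpr ⟨_, e⟩
  have ψwd : rIdeal R a ≤ LinearMap.ker
      (LinearMap.codRestrict (rIdeal R c) (lmul ((1 - b*s)*c)) memψ) := by
    refine rIdeal_le ?_
    rw [LinearMap.mem_ker]
    apply Subtype.ext
    show ((1 - b*s)*c) * a = 0
    have e : ((1 - b*s)*c) * a = b - b*s*b := by rw [hb, hc]; noncomm_ring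
    rw [e, h1, sub_self]
  -- auxiliary killing lemmas for the left-inverse computation
  have hK1 : ∀ z : R, (1 - b*s) * (c*(b*z)) = 0 := by
    intro z
    have e : c*(b*z) = b*(c*z) := by rw [hb, hc]; noncomm_ring
    rw [e, hkill]
  have hK2 : ∀ t : R, (1 - b*s) * (c*(((1 - b*s)*c)*t)) = ((1 - b*s)*c)*t := by
    intro t
    have e : c*(((1 - b*s)*c)*t) = c*(c*t) - b*(c*(s*(c*t))) := by
      rw [hb, hc]; noncomm_ring
    rw [e, mul_sub, hkill, sub_zero]
    have e2 : (1 - b*s)*(c*(c*t)) = (1 - b*s)*(c*t) - (1 - b*s)*(b*(a*t)) := by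
      rw [hb, hc]; noncomm_ring
    rw [e2, hkill, sub_zero, ← mul_assoc]
  have eE3 : (↥(rIdeal R c)) ≃ₗ[Rᵐᵒᵖ] (↥(rIdeal R b) × (R ⧸ rIdeal R a)) := by
    refine LinearEquiv.ofLinear
      (LinearMap.prod (mapIdeal (1 - (1 - b*s)*c) _ _ memG1)
        (((rIdeal R a).mkQ).comp (Submodule.subtype _)))
      (LinearMap.coprod (Submodule.inclusion hBC)
        (Submodule.liftQ _ (LinearMap.codRestrict (rIdeal R c) (lmul ((1 - b*s)*c)) memψ) ψwd))
      ?_ ?_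
    · apply LinearMap.ext; rintro ⟨⟨w, hw⟩, yq⟩
      obtain ⟨t, rfl⟩ := Submodule.mkQ_surjective _ yq
      obtain ⟨u, rfl⟩ := mem_rIdeal_iff.mp hw
      apply Prod.ext
      · apply Subtype.ext
        show (1 - (1 - b*s)*c) * (b*u + ((1 - b*s)*c) * t) = b*u
        have e : (1 - (1 - b*s)*c) * (b*u + ((1 - b*s)*c) * t)
            = (b*u + ((1 - b*s)*c)*t) - (1 - b*s)*(c*(b*u))
              - (1 - b*s)*(c*(((1 - b*s)*c)*t)) := by
          noncomm_ring
        rw [e, hK1, hK2, sub_zero, add_sub_cancel_right]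
      · show Submodule.Quotient.mk (b*u + ((1 - b*s)*c) * t) = Submodule.Quotient.mk t
        rw [Submodule.Quotient.eq]
        have e : b*u + ((1 - b*s)*c) * t - t = a * (c*u - a*t - c*(s*(c*t))) := by
          rw [hb, hc]; noncomm_ring
        exact mem_rIdeal_iff.mpr ⟨_, e⟩
    · apply LinearMap.ext; rintro ⟨v, hv⟩
      apply Subtype.ext
      show (1 - (1 - b*s)*c) * v + ((1 - b*s)*c) * v = v
      noncomm_ring
  -- assemble
  exact ⟨(LinearEquiv.prodCongr (LinearEquiv.refl Rᵐᵒᵖ (↥(rAnn R a))) eKB.symm).trans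
      (eD.trans (eE3.trans (LinearEquiv.prodComm _ _ _)))⟩

end SepAux

namespace SepAux

open MulOpposite

section Cancel

variable {T : Type} [Semiring T]

variable {M N P A B C : Type}
  [AddCommMonoid M] [Module T M] [AddCommMonoid N] [Module T N]
  [AddCommMonoid P] [Module T P] [AddCommMonoid A] [Module T A]
  [AddCommMonoid B] [Module T B] [AddCommMonoid C] [Module T C]

/-- `(Fin (n+1) → M) ≃ (Fin n → M) × M`. -/
noncomputable def powSucc (n : ℕ) : (Fin (n+1) → M) ≃ₗ[T] ((Fin n → M) × M) :=
  (LinearEquiv.funCongrLeft T M (finSumFinEquiv (m := n) (n := 1))).trans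
    ((LinearEquiv.sumArrowLequivProdArrow _ _ T M).trans
      (LinearEquiv.prodCongr (LinearEquiv.refl T _) (LinearEquiv.funUnique (Fin 1) T M)))

/-- `(Fin (n+m) → M) ≃ (Fin n → M) × (Fin m → M)`. -/
noncomputable def powAdd (n m : ℕ) : (Fin (n+m) → M) ≃ₗ[T] ((Fin n → M) × (Fin m → M)) :=
  (LinearEquiv.funCongrLeft T M (finSumFinEquiv (m := n) (n := m))).trans
    (LinearEquiv.sumArrowLequivProdArrow _ _ T M)

noncomputable def powCongr {n m : ℕ} (h : n = m) : (Fin n → M) ≃ₗ[T] (Fin m → M) :=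
  LinearEquiv.funCongrLeft T M (finCongr h.symm)

noncomputable def pow1 : (Fin 1 → M) ≃ₗ[T] M := LinearEquiv.funUnique (Fin 1) T M

/-- `A × (B × C) ≃ B × (A × C)`. -/
noncomputable def rot : (A × (B × C)) ≃ₗ[T] (B × (A × C)) :=
  (LinearEquiv.prodAssoc T A B C).symm.trans
    ((LinearEquiv.prodCongr (LinearEquiv.prodComm T A B) (LinearEquiv.refl T C)).trans
      (LinearEquiv.prodAssoc T B A C))

/-- `(A × B) × C ≃ (A × C) × B`. -/
noncomputable def swap23 : ((A × B) × C) ≃ₗ[T] ((A × C) × B) :=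
  (LinearEquiv.prodAssoc T A B C).trans
    ((LinearEquiv.prodCongr (LinearEquiv.refl T A) (LinearEquiv.prodComm T B C)).trans
      (LinearEquiv.prodAssoc T A C B).symm)

theorem projPi (hM : Module.Projective T M) (n : ℕ) :
    Module.Projective T (Fin n → M) := by
  induction n with
  | zero =>
    haveI := hM
    exact Module.Projective.of_split (0 : (Fin 0 → M) →ₗ[T] M) 0
      (LinearMap.ext fun f => Subsingleton.elim _ _)
  | succ n ih =>
    haveI := hM; haveI := ih
    exact Module.Projective.of_split (powSucc n).toLinearMap (powSucc n).symm.toLinearMap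
      (by apply LinearMap.ext; intro f; simp)

variable (X Y : Type) [AddCommMonoid X] [Module T X] [AddCommMonoid Y] [Module T Y]

/-- iterate the dagger relation. -/
noncomputable def ladder (m : ℕ) (hd : (Fin (m+1) → X) ≃ₗ[T] ((Fin m → X) × Y)) :
    ∀ k : ℕ, (Fin (m+k+1) → X) ≃ₗ[T] ((Fin m → X) × (Fin (k+1) → Y))
  | 0 => hd.trans (LinearEquiv.prodCongr (LinearEquiv.refl T _) pow1.symm)
  | (k+1) =>
    (powSucc (m+k+1)).trans <|
      (LinearEquiv.prodCongr (ladder m hd k) (LinearEquiv.refl T X)).trans <|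
        (swap23).trans <|
          (LinearEquiv.prodCongr (powSucc m).symm (LinearEquiv.refl T _)).trans <|
            (LinearEquiv.prodCongr hd (LinearEquiv.refl T _)).trans <|
              (LinearEquiv.prodAssoc T _ _ _).trans <|
                (LinearEquiv.prodCongr (LinearEquiv.refl T _) (LinearEquiv.prodComm T _ _)).trans <|
                  LinearEquiv.prodCongr (LinearEquiv.refl T _) (powSucc (k+1)).symm

end Cancel

end SepAux

namespace SepAux

section Cancel2

variable {T : Type} [Semiring T]

/-- abstract form of separativity -/
def SepHyp (T : Type) [Semiring T] : Prop :=
  ∀ (A B : Type) [AddCommGroup A] [Module T A] [AddCommGroup B] [Module T B],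
    Module.Finite T A → Module.Projective T A →
    Module.Finite T B → Module.Projective T B →
    Nonempty ((A × A) ≃ₗ[T] (A × B)) → Nonempty ((A × B) ≃ₗ[T] (B × B)) →
    Nonempty (A ≃ₗ[T] B)

variable (X Y : Type) [AddCommGroup X] [Module T X] [AddCommGroup Y] [Module T Y]

/-- squaring the ladder -/
noncomputable def ladderSq (m : ℕ) (hm : 1 ≤ m)
    (d : (Fin (m+1) → X) ≃ₗ[T] ((Fin m → X) × Y)) :
    (Fin (m+m) → X) ≃ₗ[T] ((Fin m → X) × (Fin m → Y)) :=
  (powCongr (by omega : m + m = m + (m-1) + 1)).trans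
    ((ladder X Y m d (m-1)).trans
      (LinearEquiv.prodCongr (LinearEquiv.refl T _) (powCongr (by omega : (m-1)+1 = m))))

theorem pair_of_daggers (hsep : SepHyp T)
    (finX : Module.Finite T X) (projX : Module.Projective T X)
    (finY : Module.Finite T Y) (projY : Module.Projective T Y)
    (m : ℕ) (hm : 1 ≤ m)
    (d1 : (Fin (m+1) → X) ≃ₗ[T] ((Fin m → X) × Y))
    (d2 : (Fin (m+1) → Y) ≃ₗ[T] ((Fin m → Y) × X)) :
    Nonempty ((Fin m → X) ≃ₗ[T] (Fin m → Y)) ∧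
      Nonempty ((Fin (m+1) → X) ≃ₗ[T] (Fin (m+1) → Y)) := by
  haveI := finX; haveI := finY
  haveI := projPi projX m; haveI := projPi projY m
  have eXX : ((Fin m → X) × (Fin m → X)) ≃ₗ[T] ((Fin m → X) × (Fin m → Y)) :=
    (powAdd m m).symm.trans (ladderSq X Y m hm d1)
  have eYY : ((Fin m → Y) × (Fin m → Y)) ≃ₗ[T] ((Fin m → X) × (Fin m → Y)) :=
    (powAdd m m).symm.trans ((ladderSq Y X m hm d2).trans (LinearEquiv.prodComm T _ _))
  obtain ⟨em⟩ := hsep (Fin m → X) (Fin m → Y)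
    inferInstance inferInstance inferInstance inferInstance ⟨eXX⟩ ⟨eYY.symm⟩
  have em1 : (Fin (m+1) → X) ≃ₗ[T] (Fin (m+1) → Y) :=
    d1.trans ((LinearEquiv.prodCongr em (LinearEquiv.refl T Y)).trans (powSucc m).symm)
  exact ⟨⟨em⟩, ⟨em1⟩⟩

theorem diamond (hsep : SepHyp T)
    (finX : Module.Finite T X) (projX : Module.Projective T X)
    (finY : Module.Finite T Y) (projY : Module.Projective T Y)
    (n : ℕ) (hn : 1 ≤ n)
    (EN : (Fin (n+1) → X) ≃ₗ[T] (Fin (n+1) → Y))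
    (EN1 : (Fin (n+2) → X) ≃ₗ[T] (Fin (n+2) → Y)) :
    Nonempty ((Fin (n+1) → X) ≃ₗ[T] ((Fin n → X) × Y)) := by
  haveI := finX; haveI := finY
  haveI := projPi projX n; haveI := projPi projX (n+1)
  haveI := projY
  -- u := Fin (n+1) → X,  v := (Fin n → X) × Y
  have e2u_uv : ((Fin (n+1) → X) × (Fin (n+1) → X)) ≃ₗ[T]
      ((Fin (n+1) → X) × ((Fin n → X) × Y)) :=
    (powAdd (n+1) (n+1)).symm.trans <|
      (powCongr (by omega : (n+1)+(n+1) = n + (n+2))).trans <|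
        (powAdd n (n+2)).trans <|
          (LinearEquiv.prodCongr (LinearEquiv.refl T _) EN1).trans <|
            (LinearEquiv.prodCongr (LinearEquiv.refl T _) (powSucc (n+1))).trans <|
              (LinearEquiv.prodCongr (LinearEquiv.refl T _)
                (LinearEquiv.prodCongr EN.symm (LinearEquiv.refl T Y))).trans rot
  -- common target for u×v and v×v
  have uv_common : ((Fin (n+1) → X) × ((Fin n → X) × Y)) ≃ₗ[T]
      ((Fin ((n+1)+n) → X) × Y) :=
    (LinearEquiv.prodAssoc T _ _ _).symm.trans
      (LinearEquiv.prodCongr (powAdd (n+1) n).symm (LinearEquiv.refl T Y))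
  have w_step : ((Fin (n+n) → X) × Y) ≃ₗ[T] (Fin ((n+1)+n) → X) :=
    (LinearEquiv.prodCongr ((powCongr (by omega : n+n = (n-1) + (n+1))).trans
        ((powAdd (n-1) (n+1)).trans (LinearEquiv.prodCongr (LinearEquiv.refl T _) EN)))
        (LinearEquiv.refl T Y)).trans <|
      (LinearEquiv.prodAssoc T _ _ _).trans <|
        (LinearEquiv.prodCongr (LinearEquiv.refl T _) (powSucc (n+1)).symm).trans <|
          (LinearEquiv.prodCongr (LinearEquiv.refl T _) EN1.symm).trans <|
            (powAdd (n-1) (n+2)).symm.trans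
              (powCongr (by omega : (n-1) + (n+2) = (n+1)+n))
  have vv_common : (((Fin n → X) × Y) × ((Fin n → X) × Y)) ≃ₗ[T]
      ((Fin ((n+1)+n) → X) × Y) :=
    (LinearEquiv.prodAssoc T _ _ _).trans <|
      (LinearEquiv.prodCongr (LinearEquiv.refl T _) rot).trans <|
        (LinearEquiv.prodAssoc T _ _ _).symm.trans <|
          (LinearEquiv.prodCongr (powAdd n n).symm (LinearEquiv.refl T (Y × Y))).trans <|
            (LinearEquiv.prodAssoc T _ _ _).symm.trans
              (LinearEquiv.prodCongr w_step (LinearEquiv.refl T Y))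
  exact hsep (Fin (n+1) → X) ((Fin n → X) × Y)
    inferInstance inferInstance inferInstance inferInstance
    ⟨e2u_uv⟩ ⟨uv_common.trans vv_common.symm⟩

end Cancel2

end SepAux

namespace SepAux

section Cancel3

variable {T : Type} [Semiring T]
variable (X Y : Type) [AddCommGroup X] [Module T X] [AddCommGroup Y] [Module T Y]

theorem down (hsep : SepHyp T)
    (finX : Module.Finite T X) (projX : Module.Projective T X)
    (finY : Module.Finite T Y) (projY : Module.Projective T Y) :
    ∀ n : ℕ, 1 ≤ n → Nonempty ((Fin n → X) ≃ₗ[T] (Fin n → Y)) →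
      Nonempty ((Fin (n+1) → X) ≃ₗ[T] (Fin (n+1) → Y)) → Nonempty (X ≃ₗ[T] Y) := by
  intro n
  induction n with
  | zero => intro h; exact absurd h (by omega)
  | succ k ih =>
    intro _ hEn hEn1
    rcases Nat.eq_zero_or_pos k with rfl | hk
    · obtain ⟨e⟩ := hEn
      exact ⟨pow1.symm.trans (e.trans pow1)⟩
    · obtain ⟨e1⟩ := hEn
      obtain ⟨e2⟩ := hEn1
      obtain ⟨d1⟩ := diamond X Y hsep finX projX finY projY k hk e1 e2
      obtain ⟨d2⟩ := diamond Y X hsep finY projY finX projX k hk e1.symm e2.symm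
      obtain ⟨hk1, hk2⟩ := pair_of_daggers X Y hsep finX projX finY projY k hk d1 d2
      exact ih hk hk1 hk2

theorem sep_cancel (hsep : SepHyp T)
    (finX : Module.Finite T X) (projX : Module.Projective T X)
    (finY : Module.Finite T Y) (projY : Module.Projective T Y)
    (m : ℕ) (hm : 1 ≤ m)
    (hX : Nonempty ((Fin (m+1) → X) ≃ₗ[T] ((Fin m → X) × Y)))
    (hY : Nonempty ((Fin (m+1) → Y) ≃ₗ[T] ((Fin m → Y) × X))) :
    Nonempty (X ≃ₗ[T] Y) := by
  obtain ⟨dX⟩ := hX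
  obtain ⟨dY⟩ := hY
  obtain ⟨hm1, hm2⟩ := pair_of_daggers X Y hsep finX projX finY projY m hm dX dY
  exact down X Y hsep finX projX finY projY m hm hm1 hm2

/-- lift a dagger relation from level `m` to level `m+1`. -/
noncomputable def daggerLift (m : ℕ)
    (d : (Fin (m+1) → X) ≃ₗ[T] ((Fin m → X) × Y)) :
    (Fin (m+2) → X) ≃ₗ[T] ((Fin (m+1) → X) × Y) :=
  (powSucc (m+1)).trans <|
    (LinearEquiv.prodCongr d (LinearEquiv.refl T X)).trans <|
      swap23.trans
        (LinearEquiv.prodCongr (powSucc m).symm (LinearEquiv.refl T Y))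

/-- lift a dagger relation from level `m` to any level `M ≥ m`. -/
theorem daggerUp (m : ℕ)
    (d : Nonempty ((Fin (m+1) → X) ≃ₗ[T] ((Fin m → X) × Y))) :
    ∀ M : ℕ, m ≤ M → Nonempty ((Fin (M+1) → X) ≃ₗ[T] ((Fin M → X) × Y)) := by
  intro M hM
  induction M with
  | zero =>
    have : m = 0 := by omega
    subst this; exact d
  | succ k ih =>
    rcases Nat.lt_or_ge k m with h | h
    · have : m = k + 1 := by omega
      subst this; exact d
    · obtain ⟨dk⟩ := ih h
      exact ⟨daggerLift X Y k dk⟩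

end Cancel3

end SepAux

namespace SepAux

open SepExchange MulOpposite

section Inst

variable {R : Type} [Ring R]

theorem finiteR : Module.Finite Rᵐᵒᵖ R := by
  constructor
  refine ⟨{1}, ?_⟩
  rw [eq_top_iff]
  intro v _
  simp only [Finset.coe_singleton]
  exact Submodule.mem_span_singleton.mpr ⟨op v, by simp [MulOpposite.smul_eq_mul_unop]⟩

/-- `R ≃ₗ[Rᵐᵒᵖ] Rᵐᵒᵖ`. -/
def opEquiv : R ≃ₗ[Rᵐᵒᵖ] Rᵐᵒᵖ where
  toFun := op
  invFun := unop
  left_inv := fun _ => rfl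
  right_inv := fun _ => rfl
  map_add' := fun x y => rfl
  map_smul' := fun c x => by
    simp only [MulOpposite.smul_eq_mul_unop, RingHom.id_apply, smul_eq_mul]
    rfl

theorem projectiveR : Module.Projective Rᵐᵒᵖ R :=
  Module.Projective.of_split (opEquiv (R := R)).toLinearMap
    (opEquiv (R := R)).symm.toLinearMap (by apply LinearMap.ext; intro w; simp)

theorem finite_of_split {T P M : Type} [Ring T] [AddCommGroup P] [Module T P]
    [AddCommGroup M] [Module T M] (i : P →ₗ[T] M) (s : M →ₗ[T] P)
    (h : s.comp i = LinearMap.id) (hM : Module.Finite T M) : Module.Finite T P := by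
  haveI := hM
  refine Module.Finite.of_surjective s (fun p => ⟨i p, ?_⟩)
  have := congrArg (fun g => g p) (congrArg DFunLike.coe h)
  simpa using this

end Inst

end SepAux

open SepAux MulOpposite

open SepExchange in
/-- Lemma 2.4: in a separative exchange ring with `2` invertible, if `a - a³`
is regular and `(a-a³)R ∝ r(a)`, `(a-a³)R ∝ R/aR`, then `a` is unit-regular. -/
theorem stmt9 (R : Type) [Ring R] [Invertible (2 : R)]
    (hsep : Separative R) (hex : ExchangeRing R)
    (a s : R) (h : a - a ^ 3 = (a - a ^ 3) * s * (a - a ^ 3))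
    (h1 : Propto R (↥(rIdeal R (a - a ^ 3))) (↥(rAnn R a)))
    (h2 : Propto R (↥(rIdeal R (a - a ^ 3))) (R ⧸ rIdeal R a)) :
    IsUnitRegular R a := by
  classical
  have hsepT : SepHyp Rᵐᵒᵖ := hsep
  -- make the quasi-inverse reflexive
  set t : R := s * (a - a ^ 3) * s with htdef
  have h1' : (a - a^3) * t * (a - a^3) = a - a^3 := by
    rw [htdef]
    have e1 : (a - a^3)*(s*(a-a^3)*s)*(a-a^3) = ((a-a^3)*s*(a-a^3))*(s*(a-a^3)) := by
      simp only [mul_assoc]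
    rw [e1, ← h]
    have e2 : (a-a^3)*(s*(a-a^3)) = (a-a^3)*s*(a-a^3) := (mul_assoc _ _ _).symm
    rw [e2, ← h]
  have h2' : t * (a - a^3) * t = t := by
    rw [htdef]
    have e1 : (s*(a-a^3)*s)*(a-a^3)*(s*(a-a^3)*s)
        = s*((a-a^3)*s*(a-a^3))*(s*(a-a^3)*s) := by simp only [mul_assoc]
    rw [e1, ← h]
    have e2 : s*(a-a^3)*(s*(a-a^3)*s) = s*((a-a^3)*s*(a-a^3))*s := by
      simp only [mul_assoc]
    rw [e2, ← h]
  -- a is regular with reflexive inverse x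
  set x0 : R := (1 - a^2) * t * (1 - a^2) + a with hx0
  have ha0 : a * x0 * a = a := by
    rw [hx0]
    have e : a * ((1 - a^2)*t*(1 - a^2) + a) * a
        = (a - a^3) * t * (a - a^3) + a^3 := by noncomm_ring
    rw [e, h1']
    noncomm_ring
  set x : R := x0 * a * x0 with hxdef
  have haxa : a * x * a = a := by
    rw [hxdef]
    have e : a * (x0*a*x0) * a = (a*x0*a) * x0 * a := by simp only [mul_assoc]
    rw [e, ha0, ha0]
  have hxax : x * a * x = x := by
    rw [hxdef]
    have e1 : (x0*a*x0) * a * (x0*a*x0) = x0*(a*x0*a)*(x0*a*x0) := by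
      simp only [mul_assoc]
    rw [e1, ha0]
    have e2 : x0*a*(x0*a*x0) = x0*(a*x0*a)*x0 := by simp only [mul_assoc]
    rw [e2, ha0]
  -- basic identities
  have hfidem : (1 - x*a)*(1 - x*a) = 1 - x*a := by
    have e : (1 - x*a)*(1 - x*a) = 1 - x*a - x*a + x*a*x*a := by noncomm_ring
    rw [e, hxax]
    noncomm_ring
  have heidem : (1 - a*x)*(1 - a*x) = 1 - a*x := by
    have e : (1 - a*x)*(1 - a*x) = 1 - a*x - a*x + a*x*a*x := by noncomm_ring
    rw [e, haxa]
    noncomm_ring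
  have haf : a * (1 - x*a) = 0 := by
    have e : a*(1 - x*a) = a - a*x*a := by noncomm_ring
    rw [e, haxa, sub_self]
  have hea : (1 - a*x) * a = 0 := by
    have e : (1 - a*x)*a = a - a*x*a := by noncomm_ring
    rw [e, haxa, sub_self]
  have hfw : ∀ w : R, a * w = 0 → (1 - x*a) * w = w := by
    intro w hw
    have e : (1 - x*a)*w = w - x*(a*w) := by noncomm_ring
    rw [e, hw, mul_zero, sub_zero]
  have hxe : x * (1 - a*x) = 0 := by
    have e : x*(1 - a*x) = x - x*a*x := by noncomm_ring
    rw [e, hxax, sub_self]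
  have hfx : (1 - x*a) * x = 0 := by
    have e : (1 - x*a)*x = x - x*a*x := by noncomm_ring
    rw [e, hxax, sub_self]
  -- instances
  obtain ⟨sX, hsX⟩ : ∃ sX : R →ₗ[Rᵐᵒᵖ] ↥(rAnn R a),
      sX.comp (Submodule.subtype _) = LinearMap.id := by
    refine ⟨LinearMap.codRestrict _ (lmul (1 - x*a)) (fun w => by
      show a * ((1 - x*a)*w) = 0
      rw [← mul_assoc, haf, zero_mul]), ?_⟩
    apply LinearMap.ext; rintro ⟨w, hw⟩
    apply Subtype.ext
    show (1 - x*a) * w = w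
    exact hfw w hw
  haveI finX : Module.Finite Rᵐᵒᵖ ↥(rAnn R a) :=
    finite_of_split (Submodule.subtype _) sX hsX finiteR
  haveI projX : Module.Projective Rᵐᵒᵖ ↥(rAnn R a) := by
    haveI := projectiveR (R := R)
    exact Module.Projective.of_split (Submodule.subtype _) sX hsX
  obtain ⟨σY, hσ⟩ : ∃ σY : (R ⧸ rIdeal R a) →ₗ[Rᵐᵒᵖ] R,
      ((rIdeal R a).mkQ).comp σY = LinearMap.id := by
    refine ⟨Submodule.liftQ _ (lmul (1 - a*x)) (by
      refine rIdeal_le ?_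
      rw [LinearMap.mem_ker]
      show (1 - a*x) * a = 0
      exact hea), ?_⟩
    apply LinearMap.ext; intro y
    obtain ⟨w, rfl⟩ := Submodule.mkQ_surjective _ y
    show Submodule.Quotient.mk ((1 - a*x)*w) = Submodule.Quotient.mk w
    rw [Submodule.Quotient.eq]
    have e : (1 - a*x)*w - w = a * (-(x*w)) := by noncomm_ring
    exact mem_rIdeal_iff.mpr ⟨_, e⟩
  haveI finY : Module.Finite Rᵐᵒᵖ (R ⧸ rIdeal R a) := by
    haveI := finiteR (R := R)
    exact Module.Finite.of_surjective ((rIdeal R a).mkQ) (Submodule.mkQ_surjective _)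
  haveI projY : Module.Projective Rᵐᵒᵖ (R ⧸ rIdeal R a) := by
    haveI := projectiveR (R := R)
    exact Module.Projective.of_split σY ((rIdeal R a).mkQ) hσ
  -- base isomorphism
  obtain ⟨ebase⟩ := key_iso a t h1' h2'
  -- daggers from the propto hypotheses
  obtain ⟨m₁, hm₁, N1, N1', hcompl1, ⟨eC1⟩⟩ := h1
  obtain ⟨m₂, hm₂, N2, N2', hcompl2, ⟨eC2⟩⟩ := h2
  have hCX : (↥(rIdeal R (a - a^3)) × ↥N1') ≃ₗ[Rᵐᵒᵖ] (Fin m₁ → ↥(rAnn R a)) :=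
    (LinearEquiv.prodCongr eC1 (LinearEquiv.refl _ _)).trans
      (Submodule.prodEquivOfIsCompl N1 N1' hcompl1)
  have hCY : (↥(rIdeal R (a - a^3)) × ↥N2') ≃ₗ[Rᵐᵒᵖ] (Fin m₂ → (R ⧸ rIdeal R a)) :=
    (LinearEquiv.prodCongr eC2 (LinearEquiv.refl _ _)).trans
      (Submodule.prodEquivOfIsCompl N2 N2' hcompl2)
  have d1 : (Fin (m₁+1) → ↥(rAnn R a)) ≃ₗ[Rᵐᵒᵖ]
      ((Fin m₁ → ↥(rAnn R a)) × (R ⧸ rIdeal R a)) := by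
    have s1 : (Fin (m₁+1) → ↥(rAnn R a)) ≃ₗ[Rᵐᵒᵖ]
        ((Fin m₁ → ↥(rAnn R a)) × ↥(rAnn R a)) := powSucc m₁
    have s2 : ((Fin m₁ → ↥(rAnn R a)) × ↥(rAnn R a)) ≃ₗ[Rᵐᵒᵖ]
        ((↥(rIdeal R (a - a^3)) × ↥N1') × ↥(rAnn R a)) :=
      LinearEquiv.prodCongr hCX.symm (LinearEquiv.refl Rᵐᵒᵖ (↥(rAnn R a)))
    have s3 : ((↥(rIdeal R (a - a^3)) × ↥N1') × ↥(rAnn R a)) ≃ₗ[Rᵐᵒᵖ]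
        ((↥(rIdeal R (a - a^3)) × ↥(rAnn R a)) × ↥N1') := swap23 (T := Rᵐᵒᵖ)
    have s4 : ((↥(rIdeal R (a - a^3)) × ↥(rAnn R a)) × ↥N1') ≃ₗ[Rᵐᵒᵖ]
        ((↥(rAnn R a) × ↥(rIdeal R (a - a^3))) × ↥N1') :=
      LinearEquiv.prodCongr (LinearEquiv.prodComm Rᵐᵒᵖ _ _) (LinearEquiv.refl Rᵐᵒᵖ _)
    have s5 : ((↥(rAnn R a) × ↥(rIdeal R (a - a^3))) × ↥N1') ≃ₗ[Rᵐᵒᵖ]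
        (((R ⧸ rIdeal R a) × ↥(rIdeal R (a - a^3))) × ↥N1') :=
      LinearEquiv.prodCongr ebase (LinearEquiv.refl Rᵐᵒᵖ _)
    have s6 : (((R ⧸ rIdeal R a) × ↥(rIdeal R (a - a^3))) × ↥N1') ≃ₗ[Rᵐᵒᵖ]
        ((R ⧸ rIdeal R a) × (↥(rIdeal R (a - a^3)) × ↥N1')) :=
      LinearEquiv.prodAssoc Rᵐᵒᵖ _ _ _
    have s7 : ((R ⧸ rIdeal R a) × (↥(rIdeal R (a - a^3)) × ↥N1')) ≃ₗ[Rᵐᵒᵖ]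
        ((R ⧸ rIdeal R a) × (Fin m₁ → ↥(rAnn R a))) :=
      LinearEquiv.prodCongr (LinearEquiv.refl Rᵐᵒᵖ _) hCX
    have s8 : ((R ⧸ rIdeal R a) × (Fin m₁ → ↥(rAnn R a))) ≃ₗ[Rᵐᵒᵖ]
        ((Fin m₁ → ↥(rAnn R a)) × (R ⧸ rIdeal R a)) := LinearEquiv.prodComm Rᵐᵒᵖ _ _
    exact s1.trans (s2.trans (s3.trans (s4.trans (s5.trans (s6.trans (s7.trans s8))))))
  have d2 : (Fin (m₂+1) → (R ⧸ rIdeal R a)) ≃ₗ[Rᵐᵒᵖ]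
      ((Fin m₂ → (R ⧸ rIdeal R a)) × ↥(rAnn R a)) := by
    have s1 : (Fin (m₂+1) → (R ⧸ rIdeal R a)) ≃ₗ[Rᵐᵒᵖ]
        ((Fin m₂ → (R ⧸ rIdeal R a)) × (R ⧸ rIdeal R a)) := powSucc m₂
    have s2 : ((Fin m₂ → (R ⧸ rIdeal R a)) × (R ⧸ rIdeal R a)) ≃ₗ[Rᵐᵒᵖ]
        ((↥(rIdeal R (a - a^3)) × ↥N2') × (R ⧸ rIdeal R a)) :=
      LinearEquiv.prodCongr hCY.symm (LinearEquiv.refl Rᵐᵒᵖ _)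
    have s3 : ((↥(rIdeal R (a - a^3)) × ↥N2') × (R ⧸ rIdeal R a)) ≃ₗ[Rᵐᵒᵖ]
        ((↥(rIdeal R (a - a^3)) × (R ⧸ rIdeal R a)) × ↥N2') := swap23 (T := Rᵐᵒᵖ)
    have s4 : ((↥(rIdeal R (a - a^3)) × (R ⧸ rIdeal R a)) × ↥N2') ≃ₗ[Rᵐᵒᵖ]
        (((R ⧸ rIdeal R a) × ↥(rIdeal R (a - a^3))) × ↥N2') :=
      LinearEquiv.prodCongr (LinearEquiv.prodComm Rᵐᵒᵖ _ _) (LinearEquiv.refl Rᵐᵒᵖ _)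
    have s5 : (((R ⧸ rIdeal R a) × ↥(rIdeal R (a - a^3))) × ↥N2') ≃ₗ[Rᵐᵒᵖ]
        ((↥(rAnn R a) × ↥(rIdeal R (a - a^3))) × ↥N2') :=
      LinearEquiv.prodCongr ebase.symm (LinearEquiv.refl Rᵐᵒᵖ _)
    have s6 : ((↥(rAnn R a) × ↥(rIdeal R (a - a^3))) × ↥N2') ≃ₗ[Rᵐᵒᵖ]
        (↥(rAnn R a) × (↥(rIdeal R (a - a^3)) × ↥N2')) :=
      LinearEquiv.prodAssoc Rᵐᵒᵖ _ _ _
    have s7 : (↥(rAnn R a) × (↥(rIdeal R (a - a^3)) × ↥N2')) ≃ₗ[Rᵐᵒᵖ]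
        (↥(rAnn R a) × (Fin m₂ → (R ⧸ rIdeal R a))) :=
      LinearEquiv.prodCongr (LinearEquiv.refl Rᵐᵒᵖ _) hCY
    have s8 : (↥(rAnn R a) × (Fin m₂ → (R ⧸ rIdeal R a))) ≃ₗ[Rᵐᵒᵖ]
        ((Fin m₂ → (R ⧸ rIdeal R a)) × ↥(rAnn R a)) := LinearEquiv.prodComm Rᵐᵒᵖ _ _
    exact s1.trans (s2.trans (s3.trans (s4.trans (s5.trans (s6.trans (s7.trans s8))))))
  -- cancellation
  have hd1 := daggerUp _ _ m₁ ⟨d1⟩ (max m₁ m₂) (le_max_left _ _)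
  have hd2 := daggerUp _ _ m₂ ⟨d2⟩ (max m₁ m₂) (le_max_right _ _)
  have isoXY : Nonempty (↥(rAnn R a) ≃ₗ[Rᵐᵒᵖ] (R ⧸ rIdeal R a)) :=
    sep_cancel _ _ hsepT finX projX finY projY (max m₁ m₂)
      (le_trans hm₁ (le_max_left _ _)) hd1 hd2
  obtain ⟨Φ⟩ := isoXY
  -- the quotient is isomorphic to the right ideal (1-ax)R
  have memE : ∀ w : R, (1 - a*x)*w ∈ rIdeal R (1 - a*x) :=
    fun w => mem_rIdeal_iff.mpr ⟨w, rfl⟩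
  have eqYE : (R ⧸ rIdeal R a) ≃ₗ[Rᵐᵒᵖ] ↥(rIdeal R (1 - a*x)) := by
    refine LinearEquiv.ofLinear
      (Submodule.liftQ _ (LinearMap.codRestrict _ (lmul (1 - a*x)) memE) ?_)
      (((rIdeal R a).mkQ).comp (Submodule.subtype _)) ?_ ?_
    · refine rIdeal_le ?_
      rw [LinearMap.mem_ker]
      apply Subtype.ext
      show (1 - a*x) * a = 0
      exact hea
    · apply LinearMap.ext; rintro ⟨v, hv⟩
      obtain ⟨u, rfl⟩ := mem_rIdeal_iff.mp hv
      apply Subtype.ext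
      show (1 - a*x) * ((1 - a*x)*u) = (1 - a*x)*u
      rw [← mul_assoc, heidem]
    · apply LinearMap.ext; intro y
      obtain ⟨w, rfl⟩ := Submodule.mkQ_surjective _ y
      show Submodule.Quotient.mk ((1 - a*x)*w) = (rIdeal R a).mkQ w
      rw [Submodule.mkQ_apply, Submodule.Quotient.eq]
      have e : (1 - a*x)*w - w = a * (-(x*w)) := by noncomm_ring
      exact mem_rIdeal_iff.mpr ⟨_, e⟩
  have ΨL : ↥(rAnn R a) ≃ₗ[Rᵐᵒᵖ] ↥(rIdeal R (1 - a*x)) := Φ.trans eqYE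
  have mem1f : (1 - x*a) ∈ rAnn R a := haf
  have mem1e : (1 - a*x) ∈ rIdeal R (1 - a*x) := mem_rIdeal_iff.mpr ⟨1, (mul_one _).symm⟩
  set p : R := (ΨL ⟨1 - x*a, mem1f⟩).val with hpdef
  set q : R := (ΨL.symm ⟨1 - a*x, mem1e⟩).val with hqdef
  have hp : p ∈ rIdeal R (1 - a*x) := (ΨL ⟨1 - x*a, mem1f⟩).2
  have haq : a * q = 0 := (ΨL.symm ⟨1 - a*x, mem1e⟩).2
  -- smul computation lemmas
  have ΨLsmul : ∀ w : ↥(rAnn R a), (ΨL w).val = p * w.val := by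
    intro w
    have hw : ((op w.val) • (⟨1 - x*a, mem1f⟩ : ↥(rAnn R a))) = w := by
      apply Subtype.ext
      rw [SetLike.val_smul, MulOpposite.smul_eq_mul_unop, unop_op]
      exact hfw w.val w.2
    conv_lhs => rw [← hw]
    rw [map_smul, SetLike.val_smul, MulOpposite.smul_eq_mul_unop, unop_op, hpdef]
  have ΨLsymm_smul : ∀ v : ↥(rIdeal R (1 - a*x)), (ΨL.symm v).val = q * v.val := by
    intro v
    have hv : ((op v.val) • (⟨1 - a*x, mem1e⟩ : ↥(rIdeal R (1 - a*x)))) = v := by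
      apply Subtype.ext
      rw [SetLike.val_smul, MulOpposite.smul_eq_mul_unop, unop_op]
      obtain ⟨u, hu⟩ := mem_rIdeal_iff.mp v.2
      rw [hu, ← mul_assoc, heidem]
    conv_lhs => rw [← hv]
    rw [map_smul, SetLike.val_smul, MulOpposite.smul_eq_mul_unop, unop_op, hqdef]
  have hqp : q * p = 1 - x*a := by
    have h0 := ΨL.symm_apply_apply ⟨1 - x*a, mem1f⟩
    have hval := congrArg Subtype.val h0
    rw [ΨLsymm_smul (ΨL ⟨1 - x*a, mem1f⟩)] at hval
    exact hval
  have hpq : p * q = 1 - a*x := by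
    have h0 := ΨL.apply_symm_apply ⟨1 - a*x, mem1e⟩
    have hval := congrArg Subtype.val h0
    rw [ΨLsmul (ΨL.symm ⟨1 - a*x, mem1e⟩)] at hval
    exact hval
  have hpf : p * (1 - x*a) = p := (ΨLsmul ⟨1 - x*a, mem1f⟩).symm
  have hqe : q * (1 - a*x) = q := (ΨLsymm_smul ⟨1 - a*x, mem1e⟩).symm
  have hep : (1 - a*x) * p = p := by
    obtain ⟨u, hu⟩ := mem_rIdeal_iff.mp hp
    rw [hu, ← mul_assoc, heidem]
  have hpx : p * x = 0 := by
    rw [← hpf, mul_assoc, hfx, mul_zero]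
  have hxp : x * p = 0 := by
    rw [← hep, ← mul_assoc, hxe, zero_mul]
  have hqa : q * a = 0 := by
    rw [← hqe, mul_assoc, hea, mul_zero]
  -- the unit
  have hvu : (a + p) * (x + q) = 1 := by
    have e : (a + p)*(x + q) = a*x + a*q + (p*x + p*q) := by noncomm_ring
    rw [e, haq, hpx, hpq]
    noncomm_ring
  have huv : (x + q) * (a + p) = 1 := by
    have e : (x + q)*(a + p) = x*a + x*p + (q*a + q*p) := by noncomm_ring
    rw [e, hxp, hqa, hqp]
    noncomm_ring
  refine ⟨⟨x + q, a + p, huv, hvu⟩, ?_⟩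
  show a = a * (x + q) * a
  have e : a * (x + q) * a = a*x*a + (a*q)*a := by noncomm_ring
  rw [e, haq, zero_mul, add_zero, haxa]
end
end

section
/- Every special clean element of a ring R is unit-regular. That is, if there exists an idempotent e ∈ R such that a - e is a unit and aR ∩ eR = 0, then a = aua for some unit u ∈ R. -/
noncomputable section

open SepExchange in
/-- Every special clean element is unit-regular. -/
theorem stmt12 (R : Type) [Ring R] (a e : R)
    (he : IsIdempotentElem e) (hu : IsUnit (a - e))
    (hint : rIdeal R a ⊓ rIdeal R e = ⊥) :
    ∃ u : Rˣ, a = a * (u : R) * a := by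
  obtain ⟨u, hun⟩ := hu
  refine ⟨u⁻¹, ?_⟩
  have hmi : (a - e) * (↑u⁻¹ : R) = 1 := by rw [← hun]; exact u.mul_inv
  have h1 : a * (↑u⁻¹ : R) = 1 + e * ↑u⁻¹ := by
    have : a * (↑u⁻¹ : R) = (a - e) * ↑u⁻¹ + e * ↑u⁻¹ := by
      rw [sub_mul, sub_add_cancel]
    rw [this, hmi]
  have hkey : a * (↑u⁻¹ : R) * a - a = e * (↑u⁻¹ * a) := by
    rw [h1]; noncomm_ring
  have hmem : a * (↑u⁻¹ : R) * a - a ∈ rIdeal R a ⊓ rIdeal R e := by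
    constructor
    · refine Submodule.mem_span_singleton.mpr ⟨MulOpposite.op ((↑u⁻¹ : R) * a - 1), ?_⟩
      simp only [MulOpposite.smul_eq_mul_unop, MulOpposite.unop_op]
      rw [mul_sub, mul_one, ← mul_assoc]
    · refine Submodule.mem_span_singleton.mpr ⟨MulOpposite.op ((↑u⁻¹ : R) * a), ?_⟩
      simp only [MulOpposite.smul_eq_mul_unop, MulOpposite.unop_op]
      rw [hkey]
  rw [hint] at hmem
  have := Submodule.mem_bot _ |>.mp hmem
  linear_combination (norm := noncomm_ring) -this
end
end

section
/- Let R be a ring and a ∈ R regular. If (1) aR/ar(a²) is a projective right R-module, and (2) ar(a²) ≅ R/(r(a) + aR) as right R-modules, then a is special clean: there is an idempotent e ∈ R such that a - e is a unit and aR ∩ eR = 0. -/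
noncomputable section

namespace Stmt13Aux

open SepExchange MulOpposite

variable {R : Type} [Ring R]

/-- Left multiplication as a right-module (`Rᵐᵒᵖ`-module) endomorphism. -/
def lmul (a : R) : R →ₗ[Rᵐᵒᵖ] R where
  toFun r := a * r
  map_add' := mul_add a
  map_smul' := by
    intro m r
    simp only [MulOpposite.smul_eq_mul_unop, RingHom.id_apply, mul_assoc]

@[simp] lemma lmul_apply (a r : R) : lmul a r = a * r := rfl

lemma apply_eq (f : R →ₗ[Rᵐᵒᵖ] R) (r : R) : f r = f 1 * r := by
  have h := f.map_smul (MulOpposite.op r) 1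
  simp only [MulOpposite.smul_eq_mul_unop, MulOpposite.unop_op, one_mul] at h
  simpa using h

lemma projective_self : Module.Projective Rᵐᵒᵖ R :=
  Module.Projective.of_equiv (MulOpposite.opLinearEquiv Rᵐᵒᵖ (M := R)).symm

lemma mem_rIdeal {a y : R} : y ∈ rIdeal R a ↔ ∃ t : R, y = a * t := by
  rw [rIdeal, Submodule.mem_span_singleton]
  constructor
  · rintro ⟨c, rfl⟩; exact ⟨c.unop, rfl⟩
  · rintro ⟨t, rfl⟩; exact ⟨MulOpposite.op t, rfl⟩

lemma mem_rAnn {a y : R} : y ∈ rAnn R a ↔ a * y = 0 := Iff.rfl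

lemma arAnn2_eq (a : R) : arAnn2 R a = rIdeal R a ⊓ rAnn R a := by
  ext y
  constructor
  · rintro ⟨t, rfl, ht⟩
    refine ⟨mem_rIdeal.mpr ⟨t, rfl⟩, ?_⟩
    show a * (a * t) = 0
    rw [← mul_assoc, ← pow_two]
    exact ht
  · rintro ⟨hy1, hy2⟩
    obtain ⟨t, rfl⟩ := mem_rIdeal.mp hy1
    refine ⟨t, rfl, ?_⟩
    rw [pow_two, mul_assoc]
    exact hy2

end Stmt13Aux

set_option maxHeartbeats 4000000 in
open SepExchange Stmt13Aux in
theorem stmt13' (R : Type) [Ring R] (a x : R) (ha : a = a * x * a)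
    (h1 : Module.Projective Rᵐᵒᵖ
      (↥(rIdeal R a) ⧸ (arAnn2 R a).comap (rIdeal R a).subtype))
    (h2 : Nonempty (↥(arAnn2 R a) ≃ₗ[Rᵐᵒᵖ] (R ⧸ (rAnn R a ⊔ rIdeal R a)))) :
    IsSpecialClean R a := by
  classical
  haveI : Module.Projective Rᵐᵒᵖ R := projective_self
  obtain ⟨h2e⟩ := h2
  have h₁ : a * x * a = a := ha.symm
  set d : R := x * a * x with hd
  have hda : a * d * a = a := by
    rw [hd]
    simp only [← mul_assoc]
    rw [h₁, h₁]
  have haf : a * (d * a) = a := by rw [← mul_assoc]; exact hda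
  set I : Submodule Rᵐᵒᵖ R := rIdeal R a with hI
  set K : Submodule Rᵐᵒᵖ R := rAnn R a with hK
  set C : Submodule Rᵐᵒᵖ R := arAnn2 R a with hC
  have hCIK : C = I ⊓ K := arAnn2_eq a
  have hCI : C ≤ I := by rw [hCIK]; exact inf_le_left
  have hCK : C ≤ K := by rw [hCIK]; exact inf_le_right
  -- membership in K for `(1 - d*a) * r`
  have hKmem : ∀ r : R, (1 - d * a) * r ∈ K := by
    intro r
    rw [hK, mem_rAnn, ← mul_assoc, mul_sub, mul_one, haf, sub_self, zero_mul]
  -- `a * k = 0` for `k ∈ K`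
  have hKzero : ∀ k : R, k ∈ K → a * k = 0 := fun k hk => hk
  have haI : ∀ r : R, a * r ∈ I := fun r => mem_rIdeal.mpr ⟨r, rfl⟩
  -- Projectivity of I
  have projI : Module.Projective Rᵐᵒᵖ ↥I := by
    refine Module.Projective.of_split I.subtype
      (LinearMap.codRestrict I (lmul a ∘ₗ lmul d) (fun r => haI _)) ?_
    ext ⟨m, hm⟩
    obtain ⟨t, rfl⟩ := mem_rIdeal.mp hm
    simp only [LinearMap.comp_apply, LinearMap.codRestrict_apply, Submodule.subtype_apply,
      lmul_apply, LinearMap.id_coe, id_eq]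
    show a * (d * (a * t)) = a * t
    rw [← mul_assoc, ← mul_assoc, hda]
  -- Projectivity of Z = R ⧸ I
  have projZ : Module.Projective Rᵐᵒᵖ (R ⧸ I) := by
    have hker : ∀ y ∈ I, lmul (1 - a * d) y = 0 := by
      intro y hy
      obtain ⟨t, rfl⟩ := mem_rIdeal.mp hy
      show (1 - a * d) * (a * t) = 0
      rw [sub_mul, one_mul, ← mul_assoc, hda, sub_self]
    refine Module.Projective.of_split (I.liftQ (lmul (1 - a * d)) hker) I.mkQ ?_
    refine LinearMap.ext fun z => ?_
    obtain ⟨r, rfl⟩ := I.mkQ_surjective z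
    simp only [LinearMap.comp_apply, Submodule.liftQ_apply, lmul_apply, LinearMap.id_coe, id_eq]
    rw [Submodule.mkQ_apply, Submodule.mkQ_apply, Submodule.Quotient.eq]
    show (1 - a * d) * r - r ∈ I
    have h' : (1 - a * d) * r - r = -(a * (d * r)) := by
      rw [sub_mul, one_mul, sub_sub_cancel_left, mul_assoc]
    rw [h']
    exact neg_mem (haI _)
  -- Projectivity of C, via h1
  have projC : Module.Projective Rᵐᵒᵖ ↥C := by
    set C' : Submodule Rᵐᵒᵖ ↥I := C.comap I.subtype with hC'
    obtain ⟨σ₁, hσ₁⟩ := Module.projective_lifting_property C'.mkQ LinearMap.id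
      C'.mkQ_surjective
    have hσ₁' : ∀ w, C'.mkQ (σ₁ w) = w := by
      intro w
      have := congrArg (fun f => f w) hσ₁
      simpa using this
    have hmem : ∀ i : ↥I, (i - σ₁ (C'.mkQ i) : ↥I) ∈ C' := by
      intro i
      have h0 : C'.mkQ (i - σ₁ (C'.mkQ i)) = 0 := by
        rw [map_sub, hσ₁', sub_self]
      rwa [Submodule.mkQ_apply, Submodule.Quotient.mk_eq_zero] at h0
    have key : ∀ i : ↥I, ((i - σ₁ (C'.mkQ i) : ↥I) : R) ∈ C := fun i => hmem i
    set sC : ↥I →ₗ[Rᵐᵒᵖ] ↥C :=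
      { toFun := fun i => ⟨((i - σ₁ (C'.mkQ i) : ↥I) : R), key i⟩
        map_add' := by
          intro i j
          apply Subtype.ext
          show (((i + j) - σ₁ (C'.mkQ (i + j)) : ↥I) : R) = _
          have : (i + j) - σ₁ (C'.mkQ (i + j)) =
              (i - σ₁ (C'.mkQ i)) + (j - σ₁ (C'.mkQ j)) := by
            rw [map_add, map_add]; abel
          rw [this]; rfl
        map_smul' := by
          intro m i
          apply Subtype.ext
          show (((m • i) - σ₁ (C'.mkQ (m • i)) : ↥I) : R) = _
          have : (m • i) - σ₁ (C'.mkQ (m • i)) = m • (i - σ₁ (C'.mkQ i)) := by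
            rw [map_smul, map_smul, smul_sub]
          rw [this]; rfl } with hsC
    refine Module.Projective.of_split (M := ↥I) (Submodule.inclusion hCI) sC ?_
    refine LinearMap.ext fun c => ?_
    apply Subtype.ext
    have hc0 : C'.mkQ (Submodule.inclusion hCI c) = 0 := by
      rw [Submodule.mkQ_apply, Submodule.Quotient.mk_eq_zero]
      exact c.2
    show (((Submodule.inclusion hCI c) - σ₁ (C'.mkQ (Submodule.inclusion hCI c)) : ↥I) : R)
        = (c : R)
    rw [hc0, map_zero, sub_zero]
    rfl
  -- the quotient Z = R/I and V = image of K in Z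
  set π : R →ₗ[Rᵐᵒᵖ] (R ⧸ I) := I.mkQ with hπ
  set V : Submodule Rᵐᵒᵖ (R ⧸ I) := K.map I.mkQ with hV
  -- κ : (Z/V) ≃ C from the third isomorphism theorem and h2
  set κ : ((R ⧸ I) ⧸ V) ≃ₗ[Rᵐᵒᵖ] ↥C :=
    (Submodule.quotientQuotientEquivQuotientSup I K).trans
      ((Submodule.quotEquivOfEq _ _ (sup_comm I K)).trans h2e.symm) with hκ
  -- split the quotient map Z → Z/V, producing a retraction Z → V
  have projZV : Module.Projective Rᵐᵒᵖ ((R ⧸ I) ⧸ V) := Module.Projective.of_equiv κ.symm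
  obtain ⟨σ₂, hσ₂⟩ := Module.projective_lifting_property V.mkQ LinearMap.id V.mkQ_surjective
  have hσ₂' : ∀ w, V.mkQ (σ₂ w) = w := by
    intro w; have := congrArg (fun f => f w) hσ₂; simpa using this
  have projV : Module.Projective Rᵐᵒᵖ ↥V := by
    have hmem : ∀ z : R ⧸ I, z - σ₂ (V.mkQ z) ∈ V := by
      intro z
      have h0 : V.mkQ (z - σ₂ (V.mkQ z)) = 0 := by rw [map_sub, hσ₂', sub_self]
      rwa [Submodule.mkQ_apply, Submodule.Quotient.mk_eq_zero] at h0
    refine Module.Projective.of_split (M := R ⧸ I) V.subtype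
      (LinearMap.codRestrict V (LinearMap.id - σ₂ ∘ₗ V.mkQ) hmem) ?_
    refine LinearMap.ext fun v => ?_
    apply Subtype.ext
    show (v : R ⧸ I) - σ₂ (V.mkQ (v : R ⧸ I)) = (v : R ⧸ I)
    have h0 : V.mkQ (v : R ⧸ I) = 0 := by
      rw [Submodule.mkQ_apply, Submodule.Quotient.mk_eq_zero]; exact v.2
    rw [h0, map_zero, sub_zero]
  -- the projection K → V and its splitting s₃
  have hπKmem : ∀ k : ↥K, π (k : R) ∈ V := fun k => Submodule.mem_map_of_mem k.2
  set πK : ↥K →ₗ[Rᵐᵒᵖ] ↥V := LinearMap.codRestrict V (π ∘ₗ K.subtype) hπKmem with hπK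
  have surjπK : Function.Surjective πK := by
    rintro ⟨v, hv⟩
    obtain ⟨r, hrK, hr⟩ := hv
    exact ⟨⟨r, hrK⟩, Subtype.ext hr⟩
  obtain ⟨s₃, hs₃⟩ := Module.projective_lifting_property πK LinearMap.id surjπK
  have hs₃' : ∀ v, πK (s₃ v) = v := by
    intro v; have := congrArg (fun f => f v) hs₃; simpa using this
  -- the projection K → C along (the complement given by) s₃
  have hπCmem : ∀ k : ↥K, ((k - s₃ (πK k) : ↥K) : R) ∈ C := by
    intro k
    rw [hCIK]
    refine ⟨?_, (k - s₃ (πK k) : ↥K).2⟩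
    have h0 : π ((k - s₃ (πK k) : ↥K) : R) = 0 := by
      have : π ((k - s₃ (πK k) : ↥K) : R) = (πK (k - s₃ (πK k))).1 := rfl
      rw [this, map_sub, hs₃', sub_self]
      rfl
    rwa [hπ, Submodule.mkQ_apply, Submodule.Quotient.mk_eq_zero] at h0
  set πC : ↥K →ₗ[Rᵐᵒᵖ] ↥C :=
    { toFun := fun k => ⟨((k - s₃ (πK k) : ↥K) : R), hπCmem k⟩
      map_add' := by
        intro i j
        apply Subtype.ext
        show (((i + j) - s₃ (πK (i + j)) : ↥K) : R) = _
        have : (i + j) - s₃ (πK (i + j)) = (i - s₃ (πK i)) + (j - s₃ (πK j)) := by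
          rw [map_add, map_add]; abel
        rw [this]; rfl
      map_smul' := by
        intro m i
        apply Subtype.ext
        show (((m • i) - s₃ (πK (m • i)) : ↥K) : R) = _
        have : (m • i) - s₃ (πK (m • i)) = m • (i - s₃ (πK i)) := by
          rw [map_smul, map_smul, smul_sub]
        rw [this]; rfl } with hπC
  -- X = f₀R where f₀ = d*a
  set X : Submodule Rᵐᵒᵖ R := rIdeal R (d * a) with hX
  set μ' : ↥X →ₗ[Rᵐᵒᵖ] ↥C := κ.toLinearMap ∘ₗ V.mkQ ∘ₗ π ∘ₗ X.subtype with hμ'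
  have hμ'app : ∀ xx : ↥X, μ' xx = κ (V.mkQ (π (xx : R))) := fun xx => rfl
  have surjμ' : Function.Surjective μ' := by
    intro c
    obtain ⟨z, hz⟩ := V.mkQ_surjective (κ.symm c)
    obtain ⟨r, hr⟩ := I.mkQ_surjective z
    refine ⟨⟨d * a * r, mem_rIdeal.mpr ⟨r, by rw [mul_assoc]⟩⟩, ?_⟩
    rw [hμ'app]
    have hmemV : π (d * a * r) - π r ∈ V := by
      rw [← map_sub]
      refine Submodule.mem_map_of_mem ?_
      have h4 : d * a * r - r = -((1 - d * a) * r) := by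
        rw [sub_mul, one_mul, neg_sub]
      rw [h4]
      exact neg_mem (hKmem r)
    have heq : V.mkQ (π (d * a * r)) = V.mkQ z := by
      rw [← hr]
      exact (Submodule.Quotient.eq V).mpr hmemV
    rw [heq, hz, LinearEquiv.apply_symm_apply]
  obtain ⟨lam, hlam⟩ := Module.projective_lifting_property μ' LinearMap.id surjμ'
  have hlam' : ∀ c, μ' (lam c) = c := by
    intro c; have := congrArg (fun f => f c) hlam; simpa using this
  set θ : ↥K →ₗ[Rᵐᵒᵖ] R := X.subtype ∘ₗ lam ∘ₗ πC with hθ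
  set Φ : ↥K →ₗ[Rᵐᵒᵖ] R := K.subtype + θ with hΦ
  set Ψ : ↥K →ₗ[Rᵐᵒᵖ] (R ⧸ I) := π ∘ₗ Φ with hΨ
  have hΨapp : ∀ k : ↥K, Ψ k = π ((k : R) + θ k) := fun k => rfl
  have hπc0 : ∀ c : ↥C, π (c : R) = 0 := by
    intro c
    rw [hπ, Submodule.mkQ_apply, Submodule.Quotient.mk_eq_zero]
    exact hCI c.2
  have hπkV : ∀ k : ↥K, V.mkQ (π (k : R)) = 0 := by
    intro k
    rw [Submodule.mkQ_apply, Submodule.Quotient.mk_eq_zero]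
    exact Submodule.mem_map_of_mem k.2
  have hτθ : ∀ k : ↥K, κ (V.mkQ (π (θ k))) = πC k := by
    intro k
    have : θ k = ((lam (πC k) : ↥X) : R) := rfl
    rw [this]
    exact hlam' (πC k)
  have hκΨ : ∀ k : ↥K, κ (V.mkQ (Ψ k)) = πC k := by
    intro k
    rw [hΨapp, map_add, map_add, hπkV, zero_add]
    exact hτθ k
  -- injectivity of Ψ
  have kerΨ : ∀ k : ↥K, Ψ k = 0 → k = 0 := by
    intro k hk
    have hπCk : πC k = 0 := by
      rw [← hκΨ k, hk, map_zero, map_zero]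
    have hθ0 : θ k = 0 := by
      show ((lam (πC k) : ↥X) : R) = 0
      rw [hπCk, map_zero]
      rfl
    have hπk : π (k : R) = 0 := by
      have := hΨapp k
      rw [hk, hθ0, add_zero] at this
      exact this.symm
    have hkI : (k : R) ∈ I := by
      rwa [hπ, Submodule.mkQ_apply, Submodule.Quotient.mk_eq_zero] at hπk
    have hπKk : πK k = 0 := by
      apply Subtype.ext
      show π (k : R) = 0
      exact hπk
    have : ((k - s₃ (πK k) : ↥K) : R) = 0 := congrArg Subtype.val hπCk
    rw [hπKk, map_zero, sub_zero] at this
    exact Subtype.ext this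
  -- surjectivity of Ψ
  have surjΨ : ∀ z : R ⧸ I, ∃ k : ↥K, Ψ k = z := by
    intro z
    set c₀ : ↥C := κ (V.mkQ z) with hc₀
    set kC : ↥K := ⟨(c₀ : R), hCK c₀.2⟩ with hkC
    have hπKkC : πK kC = 0 := by
      apply Subtype.ext
      show π (kC : R) = 0
      exact hπc0 c₀
    have hπCkC : πC kC = c₀ := by
      apply Subtype.ext
      show ((kC - s₃ (πK kC) : ↥K) : R) = (c₀ : R)
      rw [hπKkC, map_zero, sub_zero]
    have hθkC : θ kC = ((lam c₀ : ↥X) : R) := by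
      show ((lam (πC kC) : ↥X) : R) = _
      rw [hπCkC]
    have hwV : z - π ((lam c₀ : ↥X) : R) ∈ V := by
      have h₂ : κ (V.mkQ (π ((lam c₀ : ↥X) : R))) = c₀ := hlam' c₀
      have h₃ : V.mkQ (π ((lam c₀ : ↥X) : R)) = V.mkQ z := by
        apply κ.injective
        rw [h₂, ← hc₀]
      have : V.mkQ (z - π ((lam c₀ : ↥X) : R)) = 0 := by
        rw [map_sub, h₃, sub_self]
      rwa [Submodule.mkQ_apply, Submodule.Quotient.mk_eq_zero] at this
    set v : ↥V := ⟨z - π ((lam c₀ : ↥X) : R), hwV⟩ with hv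
    refine ⟨kC + s₃ v, ?_⟩
    have hΨkC : Ψ kC = π ((lam c₀ : ↥X) : R) := by
      rw [hΨapp, map_add, hθkC]
      have : π (kC : R) = 0 := hπc0 c₀
      rw [this, zero_add]
    have hπCs₃ : πC (s₃ v) = 0 := by
      apply Subtype.ext
      show ((s₃ v - s₃ (πK (s₃ v)) : ↥K) : R) = 0
      rw [hs₃', sub_self]
      rfl
    have hΨs₃ : Ψ (s₃ v) = z - π ((lam c₀ : ↥X) : R) := by
      rw [hΨapp]
      have hθs : θ (s₃ v) = 0 := by
        show ((lam (πC (s₃ v)) : ↥X) : R) = 0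
        rw [hπCs₃, map_zero]
        rfl
      rw [hθs, add_zero]
      show (πK (s₃ v) : R ⧸ I) = _
      rw [hs₃']
    rw [map_add, hΨkC, hΨs₃, add_sub_cancel]
  -- the candidate endomorphisms
  set pK : R →ₗ[Rᵐᵒᵖ] ↥K := LinearMap.codRestrict K (lmul (1 - d * a)) hKmem with hpK
  have hpKval : ∀ r : R, ((pK r : R)) = (1 - d * a) * r := fun r => rfl
  have hfidem : (d * a) * (d * a) = d * a := by
    rw [show (d * a) * (d * a) = d * (a * d * a) by rw [mul_assoc, ← mul_assoc a d a], hda]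
  have hKfix : ∀ k : ↥K, (1 - d * a) * (k : R) = (k : R) := by
    intro k
    have h0 : (d * a) * (k : R) = 0 := by
      rw [mul_assoc, hKzero _ k.2, mul_zero]
    rw [sub_mul, one_mul, h0, sub_zero]
  have hpKK : ∀ k : ↥K, pK ((k : R)) = k := by
    intro k
    apply Subtype.ext
    rw [hpKval, hKfix]
  have hXkill : ∀ m : R, m ∈ X → (1 - d * a) * m = 0 := by
    intro m hm
    obtain ⟨t, rfl⟩ := mem_rIdeal.mp hm
    rw [sub_mul, one_mul, ← mul_assoc, hfidem, sub_self]
  have hθX : ∀ k : ↥K, θ k ∈ X := fun k => (lam (πC k)).2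
  have haX : ∀ t : R, a * (d * a * t) = a * t := by
    intro t
    rw [← mul_assoc, ← mul_assoc, hda]
  set Ehat : R →ₗ[Rᵐᵒᵖ] R := Φ ∘ₗ pK with hEhat
  have hEhatapp : ∀ r : R, Ehat r = ((pK r : R)) + θ (pK r) := fun r => rfl
  set W : R →ₗ[Rᵐᵒᵖ] R := lmul a - Ehat with hW
  have hWapp : ∀ r : R, W r = a * r - (((pK r : R)) + θ (pK r)) := fun r => rfl
  have hπa0 : ∀ r : R, π (a * r) = 0 := by
    intro r
    rw [hπ, Submodule.mkQ_apply, Submodule.Quotient.mk_eq_zero]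
    exact haI r
  -- injectivity of W
  have injW : ∀ r : R, W r = 0 → r = 0 := by
    intro r h0
    have hsub : a * r = ((pK r : R)) + θ (pK r) := by
      have := hWapp r
      rw [h0] at this
      exact (sub_eq_zero.mp this.symm)
    have hΨ0 : Ψ (pK r) = 0 := by
      rw [hΨapp, ← hsub, hπa0]
    have hpK0 : pK r = 0 := kerΨ _ hΨ0
    have har : a * r = 0 := by
      rw [hsub, hpK0, map_zero]
      simp
    have h1f : (1 - d * a) * r = 0 := by
      have := congrArg Subtype.val hpK0
      rw [hpKval] at this
      exact this
    have : r - d * a * r = 0 := by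
      rw [← h1f, sub_mul, one_mul]
    have h2f : r = d * a * r := by
      rwa [sub_eq_zero] at this
    rw [h2f, mul_assoc, har, mul_zero]
  -- surjectivity of W
  have surjW : ∀ m : R, ∃ r : R, W r = m := by
    intro m
    obtain ⟨k, hk⟩ := surjΨ (-(π m))
    have hWk : W ((k : R)) = -(((k : R)) + θ k) := by
      rw [hWapp, hpKK, hKzero _ k.2, zero_sub]
    have hmI : m + (((k : R)) + θ k) ∈ I := by
      have : π (m + (((k : R)) + θ k)) = 0 := by
        rw [map_add, ← hΨapp, hk, add_neg_cancel]
      rwa [hπ, Submodule.mkQ_apply, Submodule.Quotient.mk_eq_zero] at this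
    obtain ⟨t, ht⟩ := mem_rIdeal.mp hmI
    refine ⟨d * a * t + (k : R), ?_⟩
    have hpKd : pK (d * a * t) = 0 := by
      apply Subtype.ext
      rw [hpKval]
      exact hXkill _ (mem_rIdeal.mpr ⟨t, by rw [mul_assoc]⟩)
    have hWd : W (d * a * t) = a * t := by
      rw [hWapp, hpKd, haX]
      simp
    rw [map_add, hWd, hWk, ← ht]
    abel
  have bijW : Function.Bijective W := by
    constructor
    · intro r s hrs
      have : W (r - s) = 0 := by rw [map_sub, hrs, sub_self]
      have := injW _ this
      exact sub_eq_zero.mp this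
    · exact fun m => surjW m
  set We : R ≃ₗ[Rᵐᵒᵖ] R := LinearEquiv.ofBijective W bijW with hWe
  have hWeapp : ∀ r : R, We r = W r := fun r => rfl
  -- the idempotent e
  set e : R := Ehat 1 with he
  have hEE : ∀ r : R, Ehat (Ehat r) = Ehat r := by
    intro r
    have hpp : pK (Ehat r) = pK r := by
      apply Subtype.ext
      rw [hpKval, hEhatapp, mul_add, hKfix, hXkill _ (hθX (pK r)), add_zero]
    show Φ (pK (Ehat r)) = Φ (pK r)
    rw [hpp]
  have hee : e * e = e := by
    have h5 : Ehat e = Ehat 1 * e := apply_eq Ehat e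
    rw [← he] at h5
    have h6 : Ehat e = e := by
      rw [he, hEE]
    rw [← h5, h6]
  have haeW : a - e = W 1 := by
    rw [hWapp, he, hEhatapp, mul_one]
  have hunit : IsUnit (a - e) := by
    rw [haeW]
    have hmul1 : W 1 * We.symm 1 = 1 := by
      have h7 : W (We.symm 1) = W 1 * We.symm 1 := apply_eq W (We.symm 1)
      rw [← h7, ← hWeapp, LinearEquiv.apply_symm_apply]
    have hmul2 : We.symm 1 * W 1 = 1 := by
      have h8 := apply_eq We.symm.toLinearMap (W 1)
      simp only [LinearEquiv.coe_coe] at h8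
      rw [← h8, ← hWeapp, LinearEquiv.symm_apply_apply]
    exact ⟨⟨W 1, We.symm 1, hmul1, hmul2⟩, rfl⟩
  have hinter : rIdeal R a ⊓ rIdeal R e = ⊥ := by
    rw [eq_bot_iff]
    rintro m ⟨hma, hme⟩
    obtain ⟨t₁, rfl⟩ := mem_rIdeal.mp hma
    obtain ⟨t₂, ht₂⟩ := mem_rIdeal.mp hme
    have h10 : e * t₂ = Ehat t₂ := by
      rw [he]
      exact (apply_eq Ehat t₂).symm
    have h11 : Ψ (pK t₂) = 0 := by
      rw [hΨapp, ← hEhatapp, ← h10, ← ht₂, hπa0]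
    have h12 : pK t₂ = 0 := kerΨ _ h11
    have h13 : a * t₁ = 0 := by
      rw [ht₂, h10, hEhatapp, h12, map_zero]
      simp
    rw [h13]
    exact Submodule.zero_mem ⊥
  exact ⟨e, hee, hunit, hinter⟩

end


open SepExchange in
/-- Lemma 3.2: if `a` is regular, `aR/ar(a²)` is projective and
`ar(a²) ≅ R/(r(a)+aR)`, then `a` is special clean. -/
theorem stmt13 (R : Type) [Ring R] (a x : R) (ha : a = a * x * a)
    (h1 : Module.Projective Rᵐᵒᵖ
      (↥(rIdeal R a) ⧸ (arAnn2 R a).comap (rIdeal R a).subtype))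
    (h2 : Nonempty (↥(arAnn2 R a) ≃ₗ[Rᵐᵒᵖ] (R ⧸ (rAnn R a ⊔ rIdeal R a)))) :
    IsSpecialClean R a := by
  exact stmt13' R a x ha h1 h2
end
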